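/- Let d and k be integers with 2 ≤ k ≤ d−1, and let c > 0 be a real constant. Let μ be the measure on ℝ given by restricting Lebesgue measure to (0, ∞) and taking density s ↦ c · (cosh s)^k · (sinh s)^{d−k−1}, and let φ : ℝ → ℝ be the map φ(s) := (cosh s)^{−(k−1)}. Then the pushforward measure φ_*μ equals the measure on ℝ given by restricting Lebesgue measure to the interval (0, 1) and taking density ρ(y) := (c/(k−1)) · y^{−(d+k−2)/(k−1)} · (1 − y^{2/(k−1)})^{(d−k)/2 − 1}. -/

import Mathlib

open MeasureTheory Real Set
open scoped ENNReal

lemma my_map_withDensity_comp {α β : Type*} [MeasurableSpace α] [MeasurableSpace β]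
    (μ : Measure α) {f : α → β} (hf : Measurable f) {g : β → ℝ≥0∞} (hg : Measurable g) :
    Measure.map f (μ.withDensity fun x => g (f x)) = (Measure.map f μ).withDensity g := by
  ext s hs
  rw [Measure.map_apply hf hs, withDensity_apply _ (hf hs), withDensity_apply _ hs,
    setLIntegral_map hs hg hf]

lemma my_map_deriv {s : Set ℝ} {f f' : ℝ → ℝ} (hs : MeasurableSet s)
    (hf' : ∀ x ∈ s, HasDerivWithinAt f (f' x) s x) (hf : Set.InjOn f s) (h'f : Measurable f) :
    Measure.map f ((volume.restrict s).withDensity fun x => ENNReal.ofReal |f' x|) =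
      volume.restrict (f '' s) := by
  have := MeasureTheory.map_withDensity_abs_det_fderiv_eq_addHaar volume hs.nullMeasurableSet
    (fun x hx => (hf' x hx).hasFDerivWithinAt) hf
  simpa only [ContinuousLinearMap.det_toSpanSingleton] using this


lemma key_algebra (d k : ℕ) (hk : 2 ≤ k) (hd : k + 1 ≤ d) (c : ℝ) {x t : ℝ}
    (hx : 1 < x) (ht : 0 < t) (hxt : x ^ 2 - t ^ 2 = 1) :
    |(-(((k - 1 : ℕ) : ℝ) * x ^ (k - 1 - 1) * t) / (x ^ (k - 1)) ^ 2)| *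
      ((c / ((k : ℝ) - 1)) * ((x ^ (k - 1))⁻¹) ^ (-(((d : ℝ) + (k : ℝ) - 2) / ((k : ℝ) - 1))) *
        (1 - ((x ^ (k - 1))⁻¹) ^ ((2 : ℝ) / ((k : ℝ) - 1))) ^ (((d : ℝ) - (k : ℝ)) / 2 - 1))
      = c * x ^ k * t ^ (d - k - 1) := by
  obtain ⟨j, rfl⟩ : ∃ j, k = j + 2 := ⟨k - 2, by omega⟩
  obtain ⟨m, rfl⟩ : ∃ m, d = (j + 2) + 1 + m := ⟨d - (j + 3), by omega⟩
  simp only [show j + 2 - 1 = j + 1 by omega, show j + 2 - 1 - 1 = j by omega,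
    show (j + 2) + 1 + m - (j + 2) - 1 = m by omega]
  have hx0 : (0 : ℝ) < x := lt_trans one_pos hx
  have hj1 : (0 : ℝ) < (j : ℝ) + 1 := by positivity
  have hy : ∀ a : ℝ, ((x ^ (j + 1))⁻¹ : ℝ) ^ a = x ^ (-((j : ℝ) + 1) * a) := by
    intro a
    rw [Real.rpow_mul hx0.le, Real.rpow_neg hx0.le,
      show ((j : ℝ) + 1) = ((j + 1 : ℕ) : ℝ) by push_cast; ring, Real.rpow_natCast]
  have h1 : ((x ^ (j + 1))⁻¹ : ℝ) ^
      (-((((j + 2 + 1 + m : ℕ) : ℝ) + ((j + 2 : ℕ) : ℝ) - 2) / (((j + 2 : ℕ) : ℝ) - 1)))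
      = x ^ (m + 2 * j + 3) := by
    rw [hy, show -((j : ℝ) + 1) *
        (-((((j + 2 + 1 + m : ℕ) : ℝ) + ((j + 2 : ℕ) : ℝ) - 2) / (((j + 2 : ℕ) : ℝ) - 1)))
        = ((m + 2 * j + 3 : ℕ) : ℝ) by
          have hne : ((j : ℝ) + 1) ≠ 0 := by positivity
          push_cast
          rw [show ((j : ℝ) + 2 - 1) = (j : ℝ) + 1 by ring]
          field_simp
          ring, Real.rpow_natCast]
  have h2 : 1 - ((x ^ (j + 1))⁻¹ : ℝ) ^ ((2 : ℝ) / (((j + 2 : ℕ) : ℝ) - 1)) = (t / x) ^ 2 := by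
    rw [hy, show -((j : ℝ) + 1) * ((2 : ℝ) / (((j + 2 : ℕ) : ℝ) - 1)) = -((2 : ℕ) : ℝ) by
      have hne : ((j : ℝ) + 1) ≠ 0 := by positivity
      push_cast
      rw [show ((j : ℝ) + 2 - 1) = (j : ℝ) + 1 by ring]
      field_simp, Real.rpow_neg hx0.le, Real.rpow_natCast, div_pow]
    field_simp
    linarith
  have h3 : ((t / x) ^ 2 : ℝ) ^ ((((j + 2 + 1 + m : ℕ) : ℝ) - ((j + 2 : ℕ) : ℝ)) / 2 - 1)
      = (t ^ m * t⁻¹) / (x ^ m * x⁻¹) := by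
    rw [← Real.rpow_natCast (t / x) 2, ← Real.rpow_mul (div_nonneg ht.le hx0.le),
      show ((2 : ℕ) : ℝ) * ((((j + 2 + 1 + m : ℕ) : ℝ) - ((j + 2 : ℕ) : ℝ)) / 2 - 1)
        = ((m : ℕ) : ℝ) + (-1) by push_cast; ring,
      Real.div_rpow ht.le hx0.le, Real.rpow_add ht, Real.rpow_add hx0,
      Real.rpow_natCast, Real.rpow_natCast, Real.rpow_neg_one, Real.rpow_neg_one]
  rw [h1, h2, h3, abs_div, abs_neg, abs_of_nonneg (by positivity), abs_of_nonneg (by positivity),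
    show (((j + 2 : ℕ) : ℝ) - 1) = (j : ℝ) + 1 by push_cast; ring]
  push_cast
  field_simp
  ring


set_option maxHeartbeats 1000000 in
/-- Pushforward of the intensity measure c·cosh^k s·sinh^{d−k−1} s ds on (0,∞)
under s ↦ (cosh s)^{−(k−1)} is the measure on (0,1) with Lebesgue density
ρ(y) = (c/(k−1))·y^{−(d+k−2)/(k−1)}·(1 − y^{2/(k−1)})^{(d−k)/2−1}
(the Lévy measure density of the limit variable Z). -/
theorem levy_measure_density (d k : ℕ) (hk : 2 ≤ k) (hkd : k ≤ d - 1) (c : ℝ) (hc : 0 < c) :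
    Measure.map (fun s : ℝ => (Real.cosh s ^ (k - 1))⁻¹)
        ((volume.restrict (Set.Ioi (0:ℝ))).withDensity fun s =>
          ENNReal.ofReal (c * Real.cosh s ^ k * Real.sinh s ^ (d - k - 1)))
      = (volume.restrict (Set.Ioo (0:ℝ) 1)).withDensity fun y =>
          ENNReal.ofReal ((c / ((k : ℝ) - 1)) *
            y ^ (-(((d : ℝ) + (k : ℝ) - 2) / ((k : ℝ) - 1))) *
            (1 - y ^ ((2 : ℝ) / ((k : ℝ) - 1))) ^ (((d : ℝ) - (k : ℝ)) / 2 - 1)) := by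
  have hd : k + 1 ≤ d := by omega
  set φ : ℝ → ℝ := fun s => (Real.cosh s ^ (k - 1))⁻¹ with hφdef
  set ρ : ℝ → ℝ := fun y => (c / ((k : ℝ) - 1)) *
      y ^ (-(((d : ℝ) + (k : ℝ) - 2) / ((k : ℝ) - 1))) *
      (1 - y ^ ((2 : ℝ) / ((k : ℝ) - 1))) ^ (((d : ℝ) - (k : ℝ)) / 2 - 1) with hρdef
  set D : ℝ → ℝ := fun s =>
    -(((k - 1 : ℕ) : ℝ) * Real.cosh s ^ (k - 1 - 1) * Real.sinh s) / (Real.cosh s ^ (k - 1)) ^ 2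
    with hDdef
  -- basic facts
  have hφcont : Continuous φ :=
    (Real.continuous_cosh.pow (k - 1)).inv₀ fun x => pow_ne_zero _ (Real.cosh_pos x).ne'
  have hφmeas : Measurable φ := hφcont.measurable
  have hDmeas : Measurable fun s => ENNReal.ofReal |D s| := by
    apply ENNReal.measurable_ofReal.comp
    apply (Measurable.neg ?_).div (Real.measurable_cosh.pow_const _ |>.pow_const _) |>.abs
    exact ((measurable_const.mul (Real.measurable_cosh.pow_const _)).mul Real.measurable_sinh)
  have hρmeas : Measurable fun y => ENNReal.ofReal (ρ y) := by
    apply ENNReal.measurable_ofReal.comp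
    apply ((measurable_const.mul (measurable_id.pow_const _)).mul
      ((measurable_const.sub (measurable_id.pow_const _)).pow_const _))
  -- derivative
  have hder : ∀ s : ℝ, HasDerivAt φ (D s) s := by
    intro s
    have h1 : HasDerivAt (fun s => Real.cosh s ^ (k - 1))
        (((k - 1 : ℕ) : ℝ) * Real.cosh s ^ (k - 1 - 1) * Real.sinh s) s :=
      (Real.hasDerivAt_cosh s).pow _
    exact h1.inv (by positivity)
  -- injectivity
  have hinj : Set.InjOn φ (Set.Ioi 0) := by
    intro a ha b hb hab
    have h1 : Real.cosh a ^ (k - 1) = Real.cosh b ^ (k - 1) := inv_injective hab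
    have h2 : Real.cosh a = Real.cosh b := by
      exact (pow_left_strictMonoOn₀ (by omega : k - 1 ≠ 0)).injOn
        (Set.mem_setOf.mpr (Real.cosh_pos (x := a)).le)
        (Set.mem_setOf.mpr (Real.cosh_pos (x := b)).le) h1
    exact Real.cosh_strictMonoOn.injOn (Set.mem_Ici.mpr (le_of_lt ha))
      (Set.mem_Ici.mpr (le_of_lt hb)) h2
  -- image
  have himg : φ '' (Set.Ioi 0) = Set.Ioo 0 1 := by
    ext y
    constructor
    · rintro ⟨s, hs, rfl⟩
      have h1 : 1 < Real.cosh s := Real.one_lt_cosh.mpr (ne_of_gt hs)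
      have h2 : 1 < Real.cosh s ^ (k - 1) := one_lt_pow₀ h1 (by omega)
      exact ⟨inv_pos.mpr (by linarith), inv_lt_one_of_one_lt₀ h2⟩
    · rintro ⟨hy0, hy1⟩
      have hyinv : 1 < y⁻¹ := (one_lt_inv₀ hy0).mpr hy1
      set b : ℝ := (y⁻¹) ^ (((k - 1 : ℕ) : ℝ)⁻¹) with hbdef
      have hb1 : 1 < b := by
        exact (Real.one_lt_rpow_iff_of_pos (by positivity)).mpr (Or.inl ⟨hyinv, inv_pos.mpr (by exact_mod_cast (by omega : 0 < k - 1))⟩)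
      have hM : b ≤ Real.cosh (Real.log (2 * b)) := by
        have h1 : Real.exp (Real.log (2 * b)) = 2 * b := Real.exp_log (by linarith)
        have h2 : 0 < Real.exp (-(Real.log (2 * b))) := Real.exp_pos _
        rw [Real.cosh_eq]
        nlinarith
      have hM0 : (0:ℝ) ≤ Real.log (2 * b) := Real.log_nonneg (by linarith)
      obtain ⟨s, hs, hcosh⟩ := intermediate_value_Icc hM0 Real.continuous_cosh.continuousOn
        (show b ∈ Set.Icc (Real.cosh 0) (Real.cosh (Real.log (2 * b))) from
          ⟨by rw [Real.cosh_zero]; exact hb1.le, hM⟩)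
      refine ⟨s, ?_, ?_⟩
      · rcases lt_or_eq_of_le hs.1 with h | h
        · exact h
        · exfalso; rw [← h, Real.cosh_zero] at hcosh; rw [← hcosh] at hb1; exact lt_irrefl _ hb1
      · show (Real.cosh s ^ (k - 1))⁻¹ = y
        rw [hcosh, hbdef, ← Real.rpow_natCast ((y⁻¹) ^ (((k - 1 : ℕ) : ℝ)⁻¹)) (k - 1),
          ← Real.rpow_mul (by positivity), inv_mul_cancel₀ (by
            exact_mod_cast (Nat.cast_ne_zero (R := ℝ)).mpr (by omega : k - 1 ≠ 0)),
          Real.rpow_one, inv_inv]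
  calc Measure.map φ ((volume.restrict (Set.Ioi (0:ℝ))).withDensity fun s =>
        ENNReal.ofReal (c * Real.cosh s ^ k * Real.sinh s ^ (d - k - 1)))
      = Measure.map φ ((volume.restrict (Set.Ioi (0:ℝ))).withDensity
          ((fun s => ENNReal.ofReal |D s|) * fun s => ENNReal.ofReal (ρ (φ s)))) := by
        congr 1
        apply withDensity_congr_ae
        rw [Filter.EventuallyEq, ae_restrict_iff' measurableSet_Ioi]
        filter_upwards with s hs
        have hx : 1 < Real.cosh s := Real.one_lt_cosh.mpr (ne_of_gt hs)
        have ht : 0 < Real.sinh s := Real.sinh_pos_iff.mpr hs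
        have hxt : Real.cosh s ^ 2 - Real.sinh s ^ 2 = 1 := Real.cosh_sq_sub_sinh_sq s
        have key := key_algebra d k hk hd c hx ht hxt
        simp only [Pi.mul_apply]
        rw [← ENNReal.ofReal_mul (abs_nonneg _)]
        exact congrArg ENNReal.ofReal key.symm
    _ = Measure.map φ (((volume.restrict (Set.Ioi (0:ℝ))).withDensity fun s =>
          ENNReal.ofReal |D s|).withDensity fun s => ENNReal.ofReal (ρ (φ s))) := by
        rw [withDensity_mul _ hDmeas
          (show Measurable fun s => ENNReal.ofReal (ρ (φ s)) from hρmeas.comp hφmeas)]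
    _ = (Measure.map φ ((volume.restrict (Set.Ioi (0:ℝ))).withDensity fun s =>
          ENNReal.ofReal |D s|)).withDensity fun y => ENNReal.ofReal (ρ y) :=
        by
          exact my_map_withDensity_comp (f := φ) (g := fun y => ENNReal.ofReal (ρ y))
            ((volume.restrict (Set.Ioi (0:ℝ))).withDensity fun s => ENNReal.ofReal |D s|)
            hφmeas hρmeas
    _ = (volume.restrict (Set.Ioo (0:ℝ) 1)).withDensity fun y => ENNReal.ofReal (ρ y) := by
        rw [my_map_deriv measurableSet_Ioi (fun x _ => (hder x).hasDerivWithinAt) hinj hφmeas,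
          himg]
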